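/- There exist self-adjoint matrices A₁, A₂, B₁, B₂ ∈ M₂(ℂ) with A₁² = A₂² = B₁² = B₂² = 1 (the identity matrix) and a vector ψ ∈ ℂ^(Fin 2 × Fin 2) with ‖ψ‖ = 1, such that the expectation value of the CHSH operator in the state ψ, namely star(ψ) ⬝ ((A₁ ⊗ₖ B₁ + A₁ ⊗ₖ B₂ + A₂ ⊗ₖ B₁ − A₂ ⊗ₖ B₂).mulVec ψ), equals 2√2. -/

import Mathlib

open Matrix Kronecker

/-- Quantum mechanics violates the CHSH inequality: there are self-adjoint
2×2 matrices squaring to the identity and a unit state vector in which the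
CHSH operator has expectation value 2√2 (> 2). -/
theorem chsh_quantum_violation :
    ∃ A₁ A₂ B₁ B₂ : Matrix (Fin 2) (Fin 2) ℂ,
      A₁.IsHermitian ∧ A₂.IsHermitian ∧ B₁.IsHermitian ∧ B₂.IsHermitian ∧
      A₁ * A₁ = 1 ∧ A₂ * A₂ = 1 ∧ B₁ * B₁ = 1 ∧ B₂ * B₂ = 1 ∧
      ∃ ψ : EuclideanSpace ℂ (Fin 2 × Fin 2), ‖ψ‖ = 1 ∧
        star (ψ : Fin 2 × Fin 2 → ℂ) ⬝ᵥ
          ((A₁ ⊗ₖ B₁ + A₁ ⊗ₖ B₂ + A₂ ⊗ₖ B₁ - A₂ ⊗ₖ B₂).mulVec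
            (ψ : Fin 2 × Fin 2 → ℂ))
          = ((2 * Real.sqrt 2 : ℝ) : ℂ) := by
  have hr : Real.sqrt 2 * Real.sqrt 2 = 2 := Real.mul_self_sqrt (by norm_num)
  set s : ℂ := ((Real.sqrt 2 : ℝ) : ℂ) with hsdef
  have hs2 : s * s = 2 := by
    rw [hsdef, ← Complex.ofReal_mul, hr]; norm_num
  have hsne : s ≠ 0 := by
    intro h; rw [h] at hs2; simp at hs2
  have hsstar : star s = s := by
    rw [hsdef]; exact Complex.conj_ofReal _
  refine ⟨!![1,0;0,-1], !![0,1;1,0], s⁻¹ • !![1,1;1,-1], s⁻¹ • !![1,-1;-1,-1],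
    ?_, ?_, ?_, ?_, ?_, ?_, ?_, ?_, ?_⟩
  · ext i j; fin_cases i <;> fin_cases j <;>
      simp [Matrix.conjTranspose_apply]
  · ext i j; fin_cases i <;> fin_cases j <;>
      simp [Matrix.conjTranspose_apply]
  · ext i j; fin_cases i <;> fin_cases j <;>
      simp [Matrix.conjTranspose_apply, hsstar]
  · ext i j; fin_cases i <;> fin_cases j <;>
      simp [Matrix.conjTranspose_apply, hsstar]
  · ext i j; fin_cases i <;> fin_cases j <;>
      simp [Matrix.mul_apply, Fin.sum_univ_two, Matrix.one_apply]
  · ext i j; fin_cases i <;> fin_cases j <;>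
      simp [Matrix.mul_apply, Fin.sum_univ_two, Matrix.one_apply]
  · ext i j; fin_cases i <;> fin_cases j <;>
      simp [Matrix.mul_apply, Fin.sum_univ_two, Matrix.one_apply] <;>
      (field_simp; linear_combination -hs2)
  · ext i j; fin_cases i <;> fin_cases j <;>
      simp [Matrix.mul_apply, Fin.sum_univ_two, Matrix.one_apply] <;>
      (field_simp; linear_combination -hs2)
  · refine ⟨(WithLp.toLp 2 (fun p : Fin 2 × Fin 2 => if p.1 = p.2 then s⁻¹ else 0) : EuclideanSpace ℂ (Fin 2 × Fin 2)), ?_, ?_⟩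
    · have habs : ‖s‖ = Real.sqrt 2 := by
        rw [hsdef, Complex.norm_real, Real.norm_eq_abs, abs_of_nonneg (Real.sqrt_nonneg 2)]
      rw [EuclideanSpace.norm_eq]
      simp [Fintype.sum_prod_type, Fin.sum_univ_two, habs]
      norm_num
    · simp only [dotProduct, Matrix.mulVec, Fintype.sum_prod_type,
        Fin.sum_univ_two, Matrix.sub_apply, Matrix.add_apply,
        Matrix.kroneckerMap_apply, Matrix.smul_apply, Pi.star_apply]
      norm_num [Matrix.cons_val_zero, Matrix.cons_val_one, hsstar, star_inv₀]
      field_simp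
      ring_nf
      linear_combination (-2 * s * s - 4) * hs2
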